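/- The function m ↦ m²/V_ν(m) is analytic and strictly increasing on the domain of means (m₋(ν), m₀(ν)). -/

import Mathlib

open MeasureTheory Set Filter Topology ENNReal

noncomputable section

/-- Cauchy-Stieltjes moment-type transform `M_ν(θ) = ∫ 1/(1-θx) dν(x)`. -/
def Mcs (ν : Measure ℝ) (θ : ℝ) : ℝ := ∫ x, 1 / (1 - θ * x) ∂ν

/-- The mean map `k_ν(θ) = (M_ν(θ) - 1)/(θ M_ν(θ))`. -/
def kcs (ν : Measure ℝ) (θ : ℝ) : ℝ := (Mcs ν θ - 1) / (θ * Mcs ν θ)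

/-- The Cauchy transform `G_ν(z) = ∫ 1/(z-x) dν(x)`. -/
def Gcs (ν : Measure ℝ) (z : ℝ) : ℝ := ∫ x, 1 / (z - x) ∂ν

/-- `Ψ_ν(z) = ∫ zx/(1-zx) dν(x)`. -/
def PsiT (ν : Measure ℝ) (z : ℝ) : ℝ := ∫ x, z * x / (1 - z * x) ∂ν

/-- Topological support of a measure on ℝ. -/
def msupp (ν : Measure ℝ) : Set ℝ := {x | ∀ U ∈ 𝓝 x, ν U ≠ 0}

/-- The natural parameter domain `(θ₋, θ₊) \ {0}`: nonzero `θ` with `θ x < 1` on the support. -/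
def ΘDom (ν : Measure ℝ) : Set ℝ := {θ | θ ≠ 0 ∧ ∀ x ∈ msupp ν, θ * x < 1}

/-- Right-sided parameter domain `(0, θ₊)`. -/
def ΘPlus (ν : Measure ℝ) : Set ℝ := {θ | 0 < θ ∧ ∀ x ∈ msupp ν, θ * x < 1}

/-- `ψ_ν`, the inverse of the mean map `k_ν` on the parameter domain. -/
def ψcs (ν : Measure ℝ) : ℝ → ℝ := Function.invFunOn (kcs ν) (ΘDom ν)

/-- `ψ_ν` for the right-sided family. -/
def ψplus (ν : Measure ℝ) : ℝ → ℝ := Function.invFunOn (kcs ν) (ΘPlus ν)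

/-- `ψ_ν` for the left-sided family (measures on `[0,∞)`, parameter `θ < 0`). -/
def ψminus (ν : Measure ℝ) : ℝ → ℝ := Function.invFunOn (kcs ν) (Iio 0)

/-- The pseudo-variance function `𝕍_ν(m) = m (1/ψ_ν(m) - m)`. -/
def pseudoVar (ν : Measure ℝ) (m : ℝ) : ℝ := m * (1 / ψcs ν m - m)

def pseudoVarMinus (ν : Measure ℝ) (m : ℝ) : ℝ := m * (1 / ψminus ν m - m)

/-- The tilted measure `P_{θ,ν}(dx) = ν(dx)/(M_ν(θ)(1-θx))`. -/
def tilt (ν : Measure ℝ) (θ : ℝ) : Measure ℝ :=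
  ν.withDensity (fun x => ENNReal.ofReal (1 / (Mcs ν θ * (1 - θ * x))))

/-- `Q_{m,ν}`, the element of the CSK family with mean `m`. -/
def Qcsk (ν : Measure ℝ) (m : ℝ) : Measure ℝ := tilt ν (ψcs ν m)

def QcskMinus (ν : Measure ℝ) (m : ℝ) : Measure ℝ := tilt ν (ψminus ν m)

/-- The variance function `V_ν(m) = ∫ (x-m)² dQ_{m,ν}(x)`. -/
def varFun (ν : Measure ℝ) (m : ℝ) : ℝ := ∫ x, (x - m) ^ 2 ∂(Qcsk ν m)

def varFunMinus (ν : Measure ℝ) (m : ℝ) : ℝ := ∫ x, (x - m) ^ 2 ∂(QcskMinus ν m)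

/-- Domain of means (two-sided). -/
def meanDom (ν : Measure ℝ) : Set ℝ := kcs ν '' ΘDom ν

/-- Right-sided domain of means `(m₀(ν), m₊(ν))`. -/
def meanDomPlus (ν : Measure ℝ) : Set ℝ := kcs ν '' ΘPlus ν

/-- Left-sided domain of means `(m₋(ν), m₀(ν))`. -/
def meanDomMinus (ν : Measure ℝ) : Set ℝ := kcs ν '' Iio 0

/-- `χ_ν`, the inverse of `Ψ_ν` on negative reals. -/
def χT (ν : Measure ℝ) : ℝ → ℝ := Function.invFunOn (PsiT ν) (Iio 0)

/-- The S-transform `S_ν(z) = χ_ν(z)(1+z)/z`. -/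
def Stransf (ν : Measure ℝ) (z : ℝ) : ℝ := χT ν z * (1 + z) / z

/-- `m₋(ν) = -1/G_ν(0)` for a measure on `[0,∞)`. -/
def mMinus (ν : Measure ℝ) : ℝ := -(Gcs ν 0)⁻¹

/-- The self-energy (K-transform) `K_ν(z) = z - 1/G_ν(z)`. -/
def KT (ν : Measure ℝ) (z : ℝ) : ℝ := z - 1 / Gcs ν z

/-- A measure is non-degenerate if it is not a Dirac mass. -/
def Nondeg (ν : Measure ℝ) : Prop := ∀ c : ℝ, ν ≠ Measure.dirac c
def pseudoVarPlus (ν : Measure ℝ) (m : ℝ) : ℝ := m * (1 / ψplus ν m - m)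

def QcskPlus (ν : Measure ℝ) (m : ℝ) : Measure ℝ := tilt ν (ψplus ν m)

def varFunPlus (ν : Measure ℝ) (m : ℝ) : ℝ := ∫ x, (x - m) ^ 2 ∂(QcskPlus ν m)

/-- The mean of a measure on `[0,∞)`, as an extended nonnegative real. -/
def m0E (ν : Measure ℝ) : ℝ≥0∞ := ∫⁻ x, ENNReal.ofReal x ∂ν

/-- The Σ-transform `Σ_ν(z) = S_ν(z/(1-z))`. -/
def SigmaT (ν : Measure ℝ) (z : ℝ) : ℝ := Stransf ν (z / (1 - z))

/-- The free Poisson (Marchenko–Pastur) law with density `(1/2π)√((4-x)/x)` on `(0,4)`. -/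
def freePoisson : Measure ℝ :=
  volume.withDensity (fun x => ENNReal.ofReal
    (Set.indicator (Ioo 0 4) (fun y => (1/(2*Real.pi)) * Real.sqrt ((4 - y)/y)) x))

namespace CSK10

open MeasureTheory Set Filter Topology ENNReal Function

variable {ν : Measure ℝ} {θ θ₀ : ℝ}

lemma ae_nonneg (hpos : ν (Iio 0) = 0) : ∀ᵐ x ∂ν, 0 ≤ x := by
  rw [ae_iff]
  have h : {x : ℝ | ¬ 0 ≤ x} = Iio 0 := by ext x; simp [not_le]
  rw [h]; exact hpos

lemma den_pos {x : ℝ} (hθ : θ < 0) (hx : 0 ≤ x) : 0 < 1 - θ * x := by nlinarith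

lemma f_nonneg {x : ℝ} (n : ℕ) (hθ : θ < 0) (hx : 0 ≤ x) :
    0 ≤ x ^ n / (1 - θ * x) ^ (n + 1) := by
  have := den_pos hθ hx; positivity

lemma f_le {x : ℝ} (n : ℕ) (hθ : θ < 0) (hx : 0 ≤ x) :
    x ^ n / (1 - θ * x) ^ (n + 1) ≤ (-θ)⁻¹ ^ n := by
  have h1 : 0 < 1 - θ * x := den_pos hθ hx
  have hθ' : (0:ℝ) < -θ := by linarith
  have h2 : -θ * x ≤ 1 - θ * x := by nlinarith
  have h3 : (-θ * x) ^ n ≤ (1 - θ * x) ^ n := pow_le_pow_left₀ (by positivity) h2 n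
  have h4 : (1 - θ * x) ^ n ≤ (1 - θ * x) ^ (n + 1) :=
    pow_le_pow_right₀ (by nlinarith) (Nat.le_succ n)
  rw [div_le_iff₀ (by positivity)]
  calc x ^ n = (-θ)⁻¹ ^ n * ((-θ) * x) ^ n := by
        rw [mul_pow, ← mul_assoc, ← mul_pow, inv_mul_cancel₀ hθ'.ne', one_pow, one_mul]
    _ ≤ (-θ)⁻¹ ^ n * (1 - θ * x) ^ (n + 1) :=
        mul_le_mul_of_nonneg_left (h3.trans h4) (by positivity)

lemma f_meas (θ : ℝ) (n : ℕ) : Measurable fun x : ℝ => x ^ n / (1 - θ * x) ^ (n + 1) :=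
  (measurable_id.pow_const n).div
    ((measurable_const.sub (measurable_id.const_mul θ)).pow_const (n + 1))

lemma f_int [IsProbabilityMeasure ν] (hpos : ν (Iio 0) = 0) (hθ : θ < 0) (n : ℕ) :
    Integrable (fun x => x ^ n / (1 - θ * x) ^ (n + 1)) ν := by
  refine Integrable.mono' (integrable_const ((-θ)⁻¹ ^ n)) (f_meas θ n).aestronglyMeasurable ?_
  filter_upwards [ae_nonneg hpos] with x hx
  rw [Real.norm_eq_abs, abs_of_nonneg (f_nonneg n hθ hx)]
  exact f_le n hθ hx

/-- coefficients of the power series of `Mcs` -/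
noncomputable def Aint (ν : Measure ℝ) (θ : ℝ) (n : ℕ) : ℝ :=
  ∫ x, x ^ n / (1 - θ * x) ^ (n + 1) ∂ν

lemma A_nonneg (hpos : ν (Iio 0) = 0) (hθ : θ < 0) (n : ℕ) : 0 ≤ Aint ν θ n :=
  integral_nonneg_of_ae (by filter_upwards [ae_nonneg hpos] with x hx using f_nonneg n hθ hx)

lemma A_le [IsProbabilityMeasure ν] (hpos : ν (Iio 0) = 0) (hθ : θ < 0) (n : ℕ) :
    Aint ν θ n ≤ (-θ)⁻¹ ^ n := by
  have h := integral_mono_ae (f_int hpos hθ n) (integrable_const ((-θ)⁻¹ ^ n))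
    (by filter_upwards [ae_nonneg hpos] with x hx using f_le n hθ hx)
  simpa [Aint] using h

lemma int_one_div [IsProbabilityMeasure ν] (hpos : ν (Iio 0) = 0) (hθ : θ < 0) :
    Integrable (fun x => 1 / (1 - θ * x)) ν := by
  have := f_int hpos hθ 0
  simpa using this

lemma geom_id {y x : ℝ} (hθ₀ : θ₀ < 0) (hθ : θ₀ + y < 0) (hx : 0 ≤ x) (n : ℕ) :
    ∑ k ∈ Finset.range n, x ^ k / (1 - θ₀ * x) ^ (k + 1) * y ^ k
      = 1 / (1 - (θ₀ + y) * x) - (y * x / (1 - θ₀ * x)) ^ n * (1 / (1 - (θ₀ + y) * x)) := by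
  have h0 : (1 - θ₀ * x) ≠ 0 := (den_pos hθ₀ hx).ne'
  have h1 : (1 - (θ₀ + y) * x) ≠ 0 := (den_pos hθ hx).ne'
  induction n with
  | zero => simp
  | succ n ih =>
    rw [Finset.sum_range_succ, ih]
    rw [div_pow, div_pow, mul_pow, mul_pow]
    field_simp
    ring

lemma g_bound {y x : ℝ} (hθ₀ : θ₀ < 0) (hθ : θ₀ + y < 0) (hx : 0 ≤ x) (n : ℕ) :
    |(y * x / (1 - θ₀ * x)) ^ n * (1 / (1 - (θ₀ + y) * x))| ≤ (|y| * (-θ₀)⁻¹) ^ n := by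
  have h0 := den_pos hθ₀ hx
  have h1 := den_pos hθ hx
  have hθ' : (0:ℝ) < -θ₀ := by linarith
  rw [abs_mul, abs_pow]
  have hr : |y * x / (1 - θ₀ * x)| ≤ |y| * (-θ₀)⁻¹ := by
    rw [abs_div, abs_of_pos h0, abs_mul, abs_of_nonneg hx, div_le_iff₀ h0]
    have h2 : x ≤ (-θ₀)⁻¹ * (1 - θ₀ * x) := by
      rw [inv_mul_eq_div, le_div_iff₀ hθ']
      nlinarith
    calc |y| * x ≤ |y| * ((-θ₀)⁻¹ * (1 - θ₀ * x)) :=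
          mul_le_mul_of_nonneg_left h2 (abs_nonneg y)
      _ = |y| * (-θ₀)⁻¹ * (1 - θ₀ * x) := by ring
  calc |y * x / (1 - θ₀ * x)| ^ n * |1 / (1 - (θ₀ + y) * x)|
      ≤ (|y| * (-θ₀)⁻¹) ^ n * 1 := by
        apply mul_le_mul (pow_le_pow_left₀ (abs_nonneg _) hr n) ?_ (abs_nonneg _) (by positivity)
        rw [abs_of_pos (by positivity), div_le_one h1]
        nlinarith
    _ = (|y| * (-θ₀)⁻¹) ^ n := mul_one _

lemma g_meas (θ₀ y : ℝ) (n : ℕ) :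
    Measurable fun x : ℝ => (y * x / (1 - θ₀ * x)) ^ n * (1 / (1 - (θ₀ + y) * x)) :=
  (((measurable_id.const_mul y).div
    (measurable_const.sub (measurable_id.const_mul θ₀))).pow_const n).mul
    (measurable_const.div (measurable_const.sub (measurable_id.const_mul (θ₀ + y))))

lemma g_int [IsProbabilityMeasure ν] (hpos : ν (Iio 0) = 0) {y : ℝ} (hθ₀ : θ₀ < 0)
    (hθ : θ₀ + y < 0) (n : ℕ) :
    Integrable (fun x => (y * x / (1 - θ₀ * x)) ^ n * (1 / (1 - (θ₀ + y) * x))) ν := by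
  refine Integrable.mono' (integrable_const ((|y| * (-θ₀)⁻¹) ^ n))
    (g_meas θ₀ y n).aestronglyMeasurable ?_
  filter_upwards [ae_nonneg hpos] with x hx
  rw [Real.norm_eq_abs]
  exact g_bound hθ₀ hθ hx n

theorem hasFPS [IsProbabilityMeasure ν] (hpos : ν (Iio 0) = 0) (hθ₀ : θ₀ < 0) :
    HasFPowerSeriesOnBall (Mcs ν) (FormalMultilinearSeries.ofScalars ℝ (Aint ν θ₀)) θ₀
      (ENNReal.ofReal (-θ₀)) := by
  have hθ' : (0:ℝ) < -θ₀ := by linarith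
  refine ⟨?_, ?_, ?_⟩
  · have hr : ENNReal.ofReal (-θ₀) = ((Real.toNNReal (-θ₀) : NNReal) : ℝ≥0∞) := rfl
    rw [hr]
    apply FormalMultilinearSeries.le_radius_of_bound _ 1
    intro n
    rw [FormalMultilinearSeries.ofScalars_norm, Real.norm_eq_abs,
      abs_of_nonneg (A_nonneg hpos hθ₀ n)]
    have hc : ((Real.toNNReal (-θ₀) : NNReal) : ℝ) = -θ₀ := Real.coe_toNNReal _ hθ'.le
    rw [hc]
    calc Aint ν θ₀ n * (-θ₀) ^ n ≤ (-θ₀)⁻¹ ^ n * (-θ₀) ^ n :=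
          mul_le_mul_of_nonneg_right (A_le hpos hθ₀ n) (by positivity)
      _ = 1 := by rw [← mul_pow, inv_mul_cancel₀ hθ'.ne', one_pow]
  · simpa using hθ'
  · intro y hy
    have hy' : |y| < -θ₀ := by
      have h := mem_emetric_ball_zero_iff.mp hy
      rw [← ofReal_norm, ENNReal.ofReal_lt_ofReal_iff hθ'] at h
      simpa [Real.norm_eq_abs] using h
    have hθ : θ₀ + y < 0 := by
      have := le_abs_self y; linarith
    set q : ℝ := |y| * (-θ₀)⁻¹ with hqdef
    have hq0 : 0 ≤ q := by positivity
    have hq1 : q < 1 := by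
      rw [hqdef, ← div_eq_mul_inv, div_lt_one hθ']; exact hy'
    have hsum_eq : ∀ n : ℕ, ∑ k ∈ Finset.range n, Aint ν θ₀ k * y ^ k
        = Mcs ν (θ₀ + y) - ∫ x, (y * x / (1 - θ₀ * x)) ^ n * (1 / (1 - (θ₀ + y) * x)) ∂ν := by
      intro n
      have h1 : ∀ k : ℕ, Integrable (fun x => x ^ k / (1 - θ₀ * x) ^ (k + 1) * y ^ k) ν :=
        fun k => (f_int hpos hθ₀ k).mul_const _
      have h2 : ∑ k ∈ Finset.range n, Aint ν θ₀ k * y ^ k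
          = ∫ x, ∑ k ∈ Finset.range n, x ^ k / (1 - θ₀ * x) ^ (k + 1) * y ^ k ∂ν := by
        rw [integral_finset_sum _ (fun k _ => h1 k)]
        exact Finset.sum_congr rfl fun k _ => (integral_mul_const _ _).symm
      have h3 : (fun x => ∑ k ∈ Finset.range n, x ^ k / (1 - θ₀ * x) ^ (k + 1) * y ^ k)
          =ᵐ[ν] fun x => 1 / (1 - (θ₀ + y) * x)
            - (y * x / (1 - θ₀ * x)) ^ n * (1 / (1 - (θ₀ + y) * x)) := by
        filter_upwards [ae_nonneg hpos] with x hx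
        exact geom_id hθ₀ hθ hx n
      rw [h2, integral_congr_ae h3,
        integral_sub (int_one_div hpos hθ) (g_int hpos hθ₀ hθ n)]
      rfl
    have hbound : ∀ n : ℕ,
        |Mcs ν (θ₀ + y) - ∑ k ∈ Finset.range n, Aint ν θ₀ k * y ^ k| ≤ q ^ n := by
      intro n
      rw [hsum_eq n, _root_.sub_sub_cancel]
      have h := norm_integral_le_of_norm_le (μ := ν)
        (integrable_const (q ^ n))
        (by filter_upwards [ae_nonneg hpos] with x hx
            rw [Real.norm_eq_abs]
            calc |(y * x / (1 - θ₀ * x)) ^ n * (1 / (1 - (θ₀ + y) * x))|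
                ≤ (|y| * (-θ₀)⁻¹) ^ n := g_bound hθ₀ hθ hx n
              _ = q ^ n := rfl)
      rw [Real.norm_eq_abs] at h
      simpa using h
    have hsummable : Summable fun n : ℕ => Aint ν θ₀ n * y ^ n := by
      apply Summable.of_norm_bounded (summable_geometric_of_lt_one hq0 hq1)
      intro n
      rw [Real.norm_eq_abs, abs_mul, abs_of_nonneg (A_nonneg hpos hθ₀ n), abs_pow]
      calc Aint ν θ₀ n * |y| ^ n ≤ (-θ₀)⁻¹ ^ n * |y| ^ n :=
            mul_le_mul_of_nonneg_right (A_le hpos hθ₀ n) (by positivity)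
        _ = q ^ n := by rw [← mul_pow, mul_comm]
    have htends : Tendsto (fun n => ∑ k ∈ Finset.range n, Aint ν θ₀ k * y ^ k)
        atTop (𝓝 (Mcs ν (θ₀ + y))) := by
      rw [← tendsto_sub_nhds_zero_iff]
      refine squeeze_zero_norm (a := fun n => q ^ n) (fun n => ?_)
        (tendsto_pow_atTop_nhds_zero_of_lt_one hq0 hq1)
      rw [Real.norm_eq_abs, abs_sub_comm]
      exact hbound n
    have hs := hsummable.hasSum
    have heq : ∑' n : ℕ, Aint ν θ₀ n * y ^ n = Mcs ν (θ₀ + y) :=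
      tendsto_nhds_unique hs.tendsto_sum_nat htends
    rw [heq] at hs
    simp_rw [FormalMultilinearSeries.ofScalars_apply_eq, smul_eq_mul]
    exact hs

lemma M_analyticAt [IsProbabilityMeasure ν] (hpos : ν (Iio 0) = 0) (hθ₀ : θ₀ < 0) :
    AnalyticAt ℝ (Mcs ν) θ₀ :=
  (hasFPS hpos hθ₀).analyticAt

lemma M_hasDerivAt [IsProbabilityMeasure ν] (hpos : ν (Iio 0) = 0) (hθ₀ : θ₀ < 0) :
    HasDerivAt (Mcs ν) (Aint ν θ₀ 1) θ₀ := by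
  have h1 : (FormalMultilinearSeries.ofScalars ℝ (Aint ν θ₀)).coeff 1 = Aint ν θ₀ 1 := by
    show (FormalMultilinearSeries.ofScalars ℝ (Aint ν θ₀)) 1 (fun _ => (1:ℝ)) = _
    rw [FormalMultilinearSeries.ofScalars_apply_eq]
    simp
  rw [← h1]
  exact (hasFPS hpos hθ₀).hasFPowerSeriesAt.hasDerivAt

lemma integral_pos_of_pos_on_Ici [IsProbabilityMeasure ν] (hpos : ν (Iio 0) = 0)
    {f : ℝ → ℝ} (hint : Integrable f ν) (h0 : ∀ᵐ x ∂ν, 0 ≤ f x)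
    (hp : ∀ x, 0 ≤ x → 0 < f x) : 0 < ∫ x, f x ∂ν := by
  rw [integral_pos_iff_support_of_nonneg_ae h0 hint]
  have h1 : Ici (0:ℝ) ⊆ Function.support f := fun x hx => (hp x hx).ne'
  have h2 : ν (Ici 0) = 1 := by
    rw [← compl_Iio, measure_compl measurableSet_Iio (measure_ne_top ν _), hpos, measure_univ]
    simp
  calc (0:ℝ≥0∞) < 1 := by norm_num
    _ = ν (Ici 0) := h2.symm
    _ ≤ ν (Function.support f) := measure_mono h1

lemma nu_Ioi_ne_zero [IsProbabilityMeasure ν] (hpos : ν (Iio 0) = 0) (hatom : ν {0} < 1) :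
    ν (Ioi 0) ≠ 0 := by
  intro h
  have hs : ν ({(0:ℝ)}ᶜ) = 0 := by
    rw [← Iio_union_Ioi]
    exact le_antisymm ((measure_union_le _ _).trans (by rw [hpos, h]; simp)) (zero_le)
  have : ν {(0:ℝ)} = 1 := (prob_compl_eq_zero_iff (measurableSet_singleton 0)).mp hs
  exact absurd this hatom.ne

lemma integral_pos_of_pos_on_Ioi [IsProbabilityMeasure ν] (hpos : ν (Iio 0) = 0)
    (hatom : ν {0} < 1) {f : ℝ → ℝ} (hint : Integrable f ν) (h0 : ∀ᵐ x ∂ν, 0 ≤ f x)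
    (hp : ∀ x, 0 < x → 0 < f x) : 0 < ∫ x, f x ∂ν := by
  rw [integral_pos_iff_support_of_nonneg_ae h0 hint]
  have h1 : Ioi (0:ℝ) ⊆ Function.support f := fun x hx => (hp x hx).ne'
  calc (0:ℝ≥0∞) < ν (Ioi 0) := pos_iff_ne_zero.mpr (nu_Ioi_ne_zero hpos hatom)
    _ ≤ ν (Function.support f) := measure_mono h1

lemma M_mem_Ioo [IsProbabilityMeasure ν] (hpos : ν (Iio 0) = 0) (hatom : ν {0} < 1)
    (hθ : θ < 0) : Mcs ν θ ∈ Ioo (0:ℝ) 1 := by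
  constructor
  · refine integral_pos_of_pos_on_Ici hpos (int_one_div hpos hθ) ?_ ?_
    · filter_upwards [ae_nonneg hpos] with x hx
      exact (one_div_pos.mpr (den_pos hθ hx)).le
    · exact fun x hx => one_div_pos.mpr (den_pos hθ hx)
  · have hint2 : Integrable (fun x => (-θ) * x / (1 - θ * x)) ν := by
      refine Integrable.mono' (integrable_const 1) ?_ ?_
      · exact (((measurable_id.const_mul (-θ)).div
          (measurable_const.sub (measurable_id.const_mul θ)))).aestronglyMeasurable
      · filter_upwards [ae_nonneg hpos] with x hx
        have hd := den_pos hθ hx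
        have hθ' : (0:ℝ) < -θ := by linarith
        rw [Real.norm_eq_abs,
          abs_of_nonneg (div_nonneg (mul_nonneg hθ'.le hx) hd.le), div_le_one hd]
        nlinarith
    have hpos2 : 0 < ∫ x, (-θ) * x / (1 - θ * x) ∂ν := by
      refine integral_pos_of_pos_on_Ioi hpos hatom hint2 ?_ ?_
      · filter_upwards [ae_nonneg hpos] with x hx
        have hd := den_pos hθ hx
        have hθ' : (0:ℝ) < -θ := by linarith
        exact (div_nonneg (mul_nonneg hθ'.le hx) hd.le)
      · intro x hx
        have hd := den_pos hθ hx.le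
        have hθ' : (0:ℝ) < -θ := by linarith
        exact div_pos (mul_pos hθ' hx) hd
    have hid : ∫ x, (-θ) * x / (1 - θ * x) ∂ν = 1 - Mcs ν θ := by
      have hae : (fun x => (-θ) * x / (1 - θ * x))
          =ᵐ[ν] fun x => 1 - 1 / (1 - θ * x) := by
        filter_upwards [ae_nonneg hpos] with x hx
        have hd := (den_pos hθ hx).ne'
        field_simp
        ring
      rw [integral_congr_ae hae,
        integral_sub (integrable_const 1) (int_one_div hpos hθ)]
      simp [Mcs]
    linarith [hid ▸ hpos2]

lemma A1_pos [IsProbabilityMeasure ν] (hpos : ν (Iio 0) = 0) (hatom : ν {0} < 1)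
    (hθ : θ < 0) : 0 < Aint ν θ 1 := by
  refine integral_pos_of_pos_on_Ioi hpos hatom (f_int hpos hθ 1) ?_ ?_
  · filter_upwards [ae_nonneg hpos] with x hx using f_nonneg 1 hθ hx
  · intro x hx
    have hd := den_pos hθ hx.le
    positivity

lemma sq_int [IsProbabilityMeasure ν] (hpos : ν (Iio 0) = 0) (hθ : θ < 0) :
    Integrable (fun x => (1 / (1 - θ * x)) ^ 2) ν := by
  refine Integrable.mono' (integrable_const 1) ?_ ?_
  · exact ((measurable_const.div
      (measurable_const.sub (measurable_id.const_mul θ))).pow_const 2).aestronglyMeasurable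
  · filter_upwards [ae_nonneg hpos] with x hx
    have hd := den_pos hθ hx
    have h1 : 1 / (1 - θ * x) ≤ 1 := by rw [div_le_one hd]; nlinarith
    have h2 : 0 ≤ 1 / (1 - θ * x) := by positivity
    rw [Real.norm_eq_abs, abs_of_nonneg (by positivity)]
    calc (1 / (1 - θ * x)) ^ 2 ≤ 1 ^ 2 := pow_le_pow_left₀ h2 h1 2
      _ = 1 := one_pow 2

lemma M2_eq [IsProbabilityMeasure ν] (hpos : ν (Iio 0) = 0) (hθ : θ < 0) :
    ∫ x, (1 / (1 - θ * x)) ^ 2 ∂ν = Mcs ν θ + θ * Aint ν θ 1 := by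
  have hae : (fun x => (1 / (1 - θ * x)) ^ 2)
      =ᵐ[ν] fun x => 1 / (1 - θ * x) + θ * (x ^ 1 / (1 - θ * x) ^ (1 + 1)) := by
    filter_upwards [ae_nonneg hpos] with x hx
    have hd := (den_pos hθ hx).ne'
    field_simp
    ring
  rw [integral_congr_ae hae,
    integral_add (int_one_div hpos hθ) ((f_int hpos hθ 1).const_mul θ),
    integral_const_mul θ _]
  rfl

lemma var_pos [IsProbabilityMeasure ν] (hnd : Nondeg ν) (hpos : ν (Iio 0) = 0)
    (hatom : ν {0} < 1) (hθ : θ < 0) :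
    (Mcs ν θ) ^ 2 < Mcs ν θ + θ * Aint ν θ 1 := by
  rw [← M2_eq hpos hθ]
  set f : ℝ → ℝ := fun x => 1 / (1 - θ * x) with hfdef
  set μ : ℝ := Mcs ν θ with hμdef
  have hμpos : 0 < μ := (M_mem_Ioo hpos hatom hθ).1
  have hint1 : Integrable f ν := int_one_div hpos hθ
  have hint2 : Integrable (fun x => (f x) ^ 2) ν := sq_int hpos hθ
  have hintsq : Integrable (fun x => (f x - μ) ^ 2) ν := by
    have : (fun x => (f x - μ) ^ 2)
        = fun x => (f x) ^ 2 - (2 * μ) * f x + μ ^ 2 := by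
      funext x; ring
    rw [this]
    exact (hint2.sub (hint1.const_mul (2 * μ))).add (integrable_const _)
  have hexp : ∫ x, (f x - μ) ^ 2 ∂ν = (∫ x, (f x) ^ 2 ∂ν) - μ ^ 2 := by
    have h : (fun x => (f x - μ) ^ 2)
        = fun x => (f x) ^ 2 - (2 * μ) * f x + μ ^ 2 := by
      funext x; ring
    have hsub : Integrable (fun x => (f x) ^ 2 - (2 * μ) * f x) ν :=
      hint2.sub (hint1.const_mul (2 * μ))
    have hcm : Integrable (fun x => (2 * μ) * f x) ν := hint1.const_mul (2 * μ)
    rw [h, integral_add hsub (integrable_const _),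
      integral_sub hint2 hcm, integral_const_mul (2 * μ) f, integral_const]
    have hMf : ∫ x, f x ∂ν = μ := rfl
    rw [hMf]
    simp
    ring
  have h0 : 0 ≤ ∫ x, (f x - μ) ^ 2 ∂ν := integral_nonneg fun x => sq_nonneg _
  have hne : ∫ x, (f x - μ) ^ 2 ∂ν ≠ 0 := by
    intro habs
    have hae0 : (fun x => (f x - μ) ^ 2) =ᵐ[ν] 0 :=
      (integral_eq_zero_iff_of_nonneg (fun x => sq_nonneg _) hintsq).mp habs
    set c : ℝ := (1 - 1 / μ) / θ with hcdef
    have hxc : ∀ᵐ x ∂ν, x = c := by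
      filter_upwards [hae0] with x hx
      have hfx : f x = μ := sub_eq_zero.mp ((pow_eq_zero_iff two_ne_zero).mp hx)
      have hd : 1 - θ * x ≠ 0 := by
        intro h
        have hz : f x = 0 := by simp only [hfdef, h, _root_.div_zero]
        rw [hfx] at hz
        exact hμpos.ne' hz
      have h1 : 1 = μ * (1 - θ * x) := (div_eq_iff hd).mp hfx
      rw [hcdef, eq_div_iff (ne_of_lt hθ)]
      field_simp
      nlinarith [h1]
    have hcompl : ν {x : ℝ | x ≠ c} = 0 := ae_iff.mp hxc
    have hdirac : ν = Measure.dirac c := by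
      ext s hs
      rw [Measure.dirac_apply' _ hs]
      by_cases hcs : c ∈ s
      · rw [Set.indicator_of_mem hcs]
        have hsc : ν sᶜ = 0 :=
          measure_mono_null (fun x hx (hxc' : x = c) => hx (hxc' ▸ hcs)) hcompl
        exact (prob_compl_eq_zero_iff hs).mp hsc
      · rw [Set.indicator_of_notMem hcs]
        exact measure_mono_null (fun x hx (hxc' : x = c) => hcs (hxc' ▸ hx)) hcompl
    exact hnd c hdirac
  nlinarith [lt_of_le_of_ne h0 (Ne.symm hne), hexp]

/-- derivative of `kcs` -/
noncomputable def kD (ν : Measure ℝ) (θ : ℝ) : ℝ :=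
  (Mcs ν θ + θ * Aint ν θ 1 - (Mcs ν θ) ^ 2) / (θ * Mcs ν θ) ^ 2

lemma thetaM_ne [IsProbabilityMeasure ν] (hpos : ν (Iio 0) = 0) (hatom : ν {0} < 1)
    (hθ : θ < 0) : θ * Mcs ν θ ≠ 0 :=
  (mul_neg_of_neg_of_pos hθ (M_mem_Ioo hpos hatom hθ).1).ne

lemma k_hasDerivAt [IsProbabilityMeasure ν] (hpos : ν (Iio 0) = 0) (hatom : ν {0} < 1)
    (hθ : θ < 0) : HasDerivAt (kcs ν) (kD ν θ) θ := by
  have hM := M_hasDerivAt hpos hθ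
  have hne := thetaM_ne hpos hatom hθ
  have hv : HasDerivAt (fun t => t * Mcs ν t) (1 * Mcs ν θ + θ * Aint ν θ 1) θ :=
    (hasDerivAt_id θ).mul hM
  have hu : HasDerivAt (fun t => Mcs ν t - 1) (Aint ν θ 1) θ := hM.sub_const 1
  have h := hu.div hv hne
  have heq : (Aint ν θ 1 * (θ * Mcs ν θ)
      - (Mcs ν θ - 1) * (1 * Mcs ν θ + θ * Aint ν θ 1)) / (θ * Mcs ν θ) ^ 2
      = kD ν θ := by
    rw [kD]
    congr 1
    ring
  rw [heq] at h
  exact h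

lemma kD_pos [IsProbabilityMeasure ν] (hnd : Nondeg ν) (hpos : ν (Iio 0) = 0)
    (hatom : ν {0} < 1) (hθ : θ < 0) : 0 < kD ν θ := by
  have h1 := var_pos hnd hpos hatom hθ
  have h2 := thetaM_ne hpos hatom hθ
  exact div_pos (by linarith) (pow_two_pos_of_ne_zero h2)

lemma k_analyticAt [IsProbabilityMeasure ν] (hpos : ν (Iio 0) = 0) (hatom : ν {0} < 1)
    (hθ : θ < 0) : AnalyticAt ℝ (kcs ν) θ := by
  have hM := M_analyticAt hpos hθ
  have hne := thetaM_ne hpos hatom hθ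
  exact (hM.sub analyticAt_const).div ((analyticAt_id).mul hM) hne

lemma k_strictMono [IsProbabilityMeasure ν] (hnd : Nondeg ν) (hpos : ν (Iio 0) = 0)
    (hatom : ν {0} < 1) : StrictMonoOn (kcs ν) (Iio 0) := by
  apply strictMonoOn_of_deriv_pos (convex_Iio 0)
  · exact fun θ hθ => ((k_analyticAt hpos hatom hθ).continuousAt).continuousWithinAt
  · intro θ hθ
    rw [interior_Iio] at hθ
    rw [(k_hasDerivAt hpos hatom hθ).deriv]
    exact kD_pos hnd hpos hatom hθ

lemma M_strictMono [IsProbabilityMeasure ν] (hpos : ν (Iio 0) = 0) (hatom : ν {0} < 1) :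
    StrictMonoOn (Mcs ν) (Iio 0) := by
  apply strictMonoOn_of_deriv_pos (convex_Iio 0)
  · exact fun θ hθ => ((M_analyticAt hpos hθ).continuousAt).continuousWithinAt
  · intro θ hθ
    rw [interior_Iio] at hθ
    rw [(M_hasDerivAt hpos hθ).deriv]
    exact A1_pos hpos hatom hθ

lemma psi_mem {m : ℝ} (h : ∃ a ∈ Iio (0:ℝ), kcs ν a = m) : ψminus ν m ∈ Iio 0 :=
  Function.invFunOn_mem h

lemma psi_keq {m : ℝ} (h : ∃ a ∈ Iio (0:ℝ), kcs ν a = m) : kcs ν (ψminus ν m) = m :=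
  Function.invFunOn_eq h

lemma psi_k [IsProbabilityMeasure ν] (hnd : Nondeg ν) (hpos : ν (Iio 0) = 0)
    (hatom : ν {0} < 1) (hθ : θ < 0) : ψminus ν (kcs ν θ) = θ := by
  have hex : ∃ a ∈ Iio (0:ℝ), kcs ν a = kcs ν θ := ⟨θ, hθ, rfl⟩
  exact (k_strictMono hnd hpos hatom).injOn (psi_mem hex) hθ (psi_keq hex)

lemma key_id [IsProbabilityMeasure ν] (hpos : ν (Iio 0) = 0) (hatom : ν {0} < 1)
    {m : ℝ} (hθ : θ < 0) (hk : kcs ν θ = m) (hψ : ψminus ν m = θ) :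
    m ^ 2 / pseudoVarMinus ν m = Mcs ν θ - 1 := by
  obtain ⟨hM0, hM1⟩ := M_mem_Ioo hpos hatom hθ
  have hθM : θ * Mcs ν θ ≠ 0 := (mul_neg_of_neg_of_pos hθ hM0).ne
  have hM1' : Mcs ν θ - 1 ≠ 0 := by linarith
  have hm : m = (Mcs ν θ - 1) / (θ * Mcs ν θ) := by rw [← hk]; rfl
  have hm0 : m ≠ 0 := by rw [hm]; exact div_ne_zero hM1' hθM
  have hθne : θ ≠ 0 := ne_of_lt hθ
  have h1 : 1 / θ - m = 1 / (θ * Mcs ν θ) := by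
    rw [hm, div_sub_div _ _ hθne hθM, div_eq_div_iff (mul_ne_zero hθne hθM) hθM]
    ring
  have hV : pseudoVarMinus ν m = m * (1 / (θ * Mcs ν θ)) := by
    rw [pseudoVarMinus, hψ, h1]
  rw [hV, hm]
  field_simp

end CSK10


/-- `m ↦ m²/𝕍_ν(m)` is analytic and strictly increasing on `(m₋(ν), m₀(ν))`. -/
theorem msq_div_pseudoVar_analytic_strictMono (ν : Measure ℝ) [IsProbabilityMeasure ν]
    (hnd : Nondeg ν) (hpos : ν (Iio 0) = 0) (hatom : ν {0} < 1) :
    AnalyticOnNhd ℝ (fun m => m ^ 2 / pseudoVarMinus ν m) (meanDomMinus ν) ∧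
    StrictMonoOn (fun m => m ^ 2 / pseudoVarMinus ν m) (meanDomMinus ν) := by
  have hkmono := CSK10.k_strictMono hnd hpos hatom
  have hMmono := CSK10.M_strictMono hpos hatom
  constructor
  · intro m hm
    obtain ⟨θ₀, hθ₀, hk₀⟩ := hm
    have hθ₀' : θ₀ < 0 := hθ₀
    subst hk₀
    have hD := CSK10.k_hasDerivAt hpos hatom hθ₀'
    have hDpos := CSK10.kD_pos hnd hpos hatom hθ₀'
    have hkana := CSK10.k_analyticAt hpos hatom hθ₀'
    have hstrict : HasStrictDerivAt (kcs ν) (CSK10.kD ν θ₀) θ₀ := by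
      obtain ⟨p, hp⟩ := hkana
      have h1 := hp.hasStrictDerivAt
      rwa [show (p 1 fun _ => 1) = CSK10.kD ν θ₀ from h1.hasDerivAt.unique hD] at h1
    have hFd := hstrict.hasStrictFDerivAt_equiv hDpos.ne'
    set F := hFd.toOpenPartialHomeomorph (kcs ν) with hFdef
    have hsrc : θ₀ ∈ F.source := hFd.mem_toOpenPartialHomeomorph_source
    have htgt : kcs ν θ₀ ∈ F.target := hFd.image_mem_toOpenPartialHomeomorph_target
    have hcoe : (F : ℝ → ℝ) = kcs ν := hFd.toOpenPartialHomeomorph_coe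
    have hsymm0 : F.symm (kcs ν θ₀) = θ₀ := by
      have h := F.left_inv hsrc
      rwa [show F θ₀ = kcs ν θ₀ from congrFun hcoe θ₀] at h
    have hψθ : ψminus ν (kcs ν θ₀) = θ₀ := CSK10.psi_k hnd hpos hatom hθ₀'
    have hfderiv : fderiv ℝ (kcs ν) θ₀
        = (ContinuousLinearEquiv.unitsEquivAut ℝ (Units.mk0 (CSK10.kD ν θ₀) hDpos.ne')
            : ℝ →L[ℝ] ℝ) := hFd.hasFDerivAt.fderiv
    have hsymm_ana : AnalyticAt ℝ F.symm (kcs ν θ₀) := by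
      refine F.analyticAt_symm (i := ContinuousLinearEquiv.unitsEquivAut ℝ
        (Units.mk0 (CSK10.kD ν θ₀) hDpos.ne')) htgt ?_ ?_
      · rw [hcoe, hsymm0]; exact hkana
      · rw [hcoe, hsymm0]; exact hfderiv
    have hcont : ContinuousAt F.symm (kcs ν θ₀) :=
      F.symm.continuousAt (by rwa [OpenPartialHomeomorph.symm_source])
    have hev2 : ∀ᶠ y in 𝓝 (kcs ν θ₀), F.symm y < 0 := by
      have hmem : Iio (0:ℝ) ∈ 𝓝 (F.symm (kcs ν θ₀)) := by
        rw [hsymm0]; exact isOpen_Iio.mem_nhds hθ₀'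
      filter_upwards [hcont.preimage_mem_nhds hmem] with y hy using hy
    have hevψ : ψminus ν =ᶠ[𝓝 (kcs ν θ₀)] F.symm := by
      filter_upwards [F.open_target.mem_nhds htgt, hev2] with y hy1 hy2
      have hky : kcs ν (F.symm y) = y := by
        rw [← congrFun hcoe (F.symm y)]; exact F.right_inv hy1
      have hex : ∃ a ∈ Iio (0:ℝ), kcs ν a = y := ⟨F.symm y, hy2, hky⟩
      exact hkmono.injOn (CSK10.psi_mem hex) hy2 ((CSK10.psi_keq hex).trans hky.symm)
    have hψana : AnalyticAt ℝ (ψminus ν) (kcs ν θ₀) := hsymm_ana.congr hevψ.symm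
    have hMana : AnalyticAt ℝ (Mcs ν) (ψminus ν (kcs ν θ₀)) := by
      rw [hψθ]; exact CSK10.M_analyticAt hpos hθ₀'
    have hcomp : AnalyticAt ℝ (fun y => Mcs ν (ψminus ν y) - 1) (kcs ν θ₀) :=
      (hMana.comp hψana).sub analyticAt_const
    apply hcomp.congr
    filter_upwards [F.open_target.mem_nhds htgt, hev2, hevψ] with y hy1 hy2 hyψ
    have hψy : ψminus ν y < 0 := by rw [hyψ]; exact hy2
    have hky : kcs ν (ψminus ν y) = y := by
      rw [hyψ, ← congrFun hcoe (F.symm y)]; exact F.right_inv hy1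
    exact (CSK10.key_id hpos hatom hψy hky rfl).symm
  · rintro m1 ⟨θ1, hθ1, rfl⟩ m2 ⟨θ2, hθ2, rfl⟩ hlt
    have hθ1' : θ1 < 0 := hθ1
    have hθ2' : θ2 < 0 := hθ2
    have h12 : θ1 < θ2 := (hkmono.lt_iff_lt hθ1 hθ2).mp hlt
    have hid1 := CSK10.key_id hpos hatom hθ1' rfl (CSK10.psi_k hnd hpos hatom hθ1')
    have hid2 := CSK10.key_id hpos hatom hθ2' rfl (CSK10.psi_k hnd hpos hatom hθ2')
    simp only []
    rw [hid1, hid2]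
    exact sub_lt_sub_right (hMmono hθ1 hθ2 h12) 1
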